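/- ∑_{n=1}^∞ h_n/n² = (7/2)·ζ(3), where h_n = ∑_{k=1}^n 1/(k-1/2). -/

import Mathlib

set_option maxHeartbeats 1000000

open scoped BigOperators
open Filter Finset

/-- ζ(p) = ∑_{n=1}^∞ 1/n^p -/
noncomputable def zetaR (p : ℕ) : ℝ := ∑' n : ℕ, 1 / ((n : ℝ) + 1) ^ p

/-- Odd harmonic number h_n^{(p)} = ∑_{k=1}^n 1/(k−1/2)^p -/
noncomputable def oddH (p n : ℕ) : ℝ := ∑ k ∈ Finset.range n, 1 / ((k : ℝ) + 1 / 2) ^ p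

/-- Alternating odd harmonic number h̄_n^{(p)} = ∑_{k=1}^n (−1)^{k−1}/(k−1/2)^p -/
noncomputable def altOddH (p n : ℕ) : ℝ :=
  ∑ k ∈ Finset.range n, (-1 : ℝ) ^ k / ((k : ℝ) + 1 / 2) ^ p

/-- Dirichlet beta β(s) = ∑_{n=0}^∞ (−1)^n/(2n+1)^s -/
noncomputable def betaD (s : ℕ) : ℝ := ∑' n : ℕ, (-1 : ℝ) ^ n / (2 * (n : ℝ) + 1) ^ s



noncomputable def aH (j : ℕ) : ℝ := (j : ℝ) + 1 / 2

lemma aH_pos (j : ℕ) : 0 < aH j := by unfold aH; positivity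

lemma aH_ne (j : ℕ) : aH j ≠ 0 := (aH_pos j).ne'

lemma aH_ge (j : ℕ) : ((j:ℝ)+1)/2 ≤ aH j := by
  unfold aH
  have : (0:ℝ) ≤ j := Nat.cast_nonneg j
  linarith

lemma inv_aH_le (j : ℕ) : 1 / aH j ≤ 2 / ((j:ℝ)+1) := by
  rw [div_le_div_iff₀ (aH_pos j) (by positivity)]
  unfold aH; nlinarith [Nat.cast_nonneg (α := ℝ) j]

lemma l_sq : Summable (fun n : ℕ => 1 / ((n:ℝ)+1)^2) := by
  have := (summable_nat_add_iff (f := fun n : ℕ => 1 / (n:ℝ)^2) 1).2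
    (Real.summable_one_div_nat_pow.2 one_lt_two)
  exact this.congr (fun n => by push_cast; ring_nf)

lemma l_cub : Summable (fun n : ℕ => 1 / ((n:ℝ)+1)^3) := by
  have := (summable_nat_add_iff (f := fun n : ℕ => 1 / (n:ℝ)^3) 1).2
    (Real.summable_one_div_nat_pow.2 (by norm_num))
  exact this.congr (fun n => by push_cast; ring_nf)

noncomputable def wH (d : ℕ) : ℝ := 1 / (((d:ℝ)+1) * Real.sqrt ((d:ℝ)+1))

lemma wH_nonneg (d : ℕ) : 0 ≤ wH d := by
  unfold wH; positivity

lemma l_w : Summable wH := by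
  have h32 : Summable (fun n : ℕ => 1 / (n:ℝ) ^ (3/2 : ℝ)) :=
    Real.summable_one_div_nat_rpow.2 (by norm_num)
  have := (summable_nat_add_iff (f := fun n : ℕ => 1 / (n:ℝ) ^ (3/2 : ℝ)) 1).2 h32
  refine this.congr (fun n => ?_)
  unfold wH
  have h1 : (0:ℝ) ≤ (n:ℝ)+1 := by positivity
  have : ((n + 1 : ℕ) : ℝ) = (n:ℝ)+1 := by push_cast; ring
  rw [this, show (3/2 : ℝ) = 1 + 1/2 by norm_num, Real.rpow_add (by positivity),
    Real.rpow_one, ← Real.sqrt_eq_rpow]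

lemma hasSum_of_tendsto {f : ℕ → ℝ} {L : ℝ} (hs : Summable f)
    (ht : Tendsto (fun N => ∑ i ∈ range N, f i) atTop (nhds L)) : HasSum f L := by
  have h := hs.hasSum
  have := tendsto_nhds_unique h.tendsto_sum_nat ht
  rwa [this] at h

lemma tele {b : ℝ} (hb : 0 < b) :
    HasSum (fun m : ℕ => 1 / (((m:ℝ)+b) * ((m:ℝ)+b+1))) (1/b) := by
  have hpt : ∀ m : ℕ, 1 / (((m:ℝ)+b) * ((m:ℝ)+b+1)) = 1/((m:ℝ)+b) - 1/((m:ℝ)+b+1) := by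
    intro m
    have h1 : (0:ℝ) < (m:ℝ)+b := by positivity
    have h2 : (0:ℝ) < (m:ℝ)+b+1 := by positivity
    field_simp
    ring
  have hps : ∀ N : ℕ, ∑ m ∈ range N, 1 / (((m:ℝ)+b) * ((m:ℝ)+b+1)) = 1/b - 1/((N:ℝ)+b) := by
    intro N
    rw [Finset.sum_congr rfl (fun m _ => hpt m)]
    have h := Finset.sum_range_sub' (fun m : ℕ => 1/((m:ℝ)+b)) N
    simp only [Nat.cast_add, Nat.cast_one, Nat.cast_zero] at h
    rw [show (1:ℝ)/b - 1/((N:ℝ)+b) = 1/((0:ℝ)+b) - 1/((N:ℝ)+b) by norm_num, ← h]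
    exact Finset.sum_congr rfl (fun m _ => by push_cast; ring_nf)
  have hsum : Summable (fun m : ℕ => 1 / (((m:ℝ)+b) * ((m:ℝ)+b+1))) := by
    apply summable_of_sum_range_le (c := 1/b) (fun n => by positivity)
    intro n
    rw [hps n]
    have : (0:ℝ) < (n:ℝ)+b := by positivity
    have : (0:ℝ) ≤ 1/((n:ℝ)+b) := by positivity
    linarith
  apply hasSum_of_tendsto hsum
  have h0 : Tendsto (fun N : ℕ => 1/((N:ℝ)+b)) atTop (nhds 0) := by
    simp only [one_div]
    apply Tendsto.inv_tendsto_atTop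
    exact tendsto_atTop_add_const_right atTop b tendsto_natCast_atTop_atTop
  have := (tendsto_const_nhds (x := 1/b) (f := atTop (α := ℕ))).sub h0
  simp only [sub_zero] at this
  exact Tendsto.congr (fun N => (hps N).symm) this



-- row comparison: 1/(x(x+1)) type vs squares
lemma row_sq_summable (j : ℕ) : Summable (fun m : ℕ => 1 / ((j:ℝ)+(m:ℝ)+1)^2) := by
  apply Summable.of_nonneg_of_le (fun m => by positivity) (fun m => ?_) l_sq
  have h1 : ((m:ℝ)+1) ≤ ((j:ℝ)+(m:ℝ)+1) := by
    have : (0:ℝ) ≤ j := Nat.cast_nonneg j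
    linarith
  have h2 : (0:ℝ) < (m:ℝ)+1 := by positivity
  apply one_div_le_one_div_of_le (by positivity)
  nlinarith

lemma row_sq_bound (j : ℕ) : (∑' m : ℕ, 1 / ((j:ℝ)+(m:ℝ)+1)^2) ≤ 2 / ((j:ℝ)+1) := by
  have ht := (tele (b := (j:ℝ)+1) (by positivity)).mul_left 2
  have h2 : (∑' m : ℕ, 2 * (1 / (((m:ℝ)+((j:ℝ)+1)) * ((m:ℝ)+((j:ℝ)+1)+1)))) = 2/((j:ℝ)+1) := by
    rw [ht.tsum_eq]; ring
  rw [← h2]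
  apply Summable.tsum_le_tsum _ (row_sq_summable j) ht.summable
  intro m
  have hx : (0:ℝ) < (j:ℝ)+(m:ℝ)+1 := by positivity
  rw [mul_one_div, div_le_div_iff₀ (by positivity) (by positivity)]
  nlinarith [Nat.cast_nonneg (α := ℝ) j, Nat.cast_nonneg (α := ℝ) m]

-- partial sums of 1/(d+1) vs sqrt
lemma sum_inv_le_sqrt : ∀ k : ℕ, ∑ d ∈ range k, 1/((d:ℝ)+1) ≤ 2 * Real.sqrt k := by
  intro k
  induction k with
  | zero => simp
  | succ k ih =>
    rw [Finset.sum_range_succ]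
    have hs : Real.sqrt k ≤ Real.sqrt (k+1) := by
      apply Real.sqrt_le_sqrt; push_cast; linarith
    have hsq : Real.sqrt ((k:ℝ)+1) * Real.sqrt ((k:ℝ)+1) = (k:ℝ)+1 :=
      Real.mul_self_sqrt (by positivity)
    rw [show (((k+1:ℕ)):ℝ) = (k:ℝ)+1 from by push_cast; ring]
    have hpos : 0 < Real.sqrt ((k:ℝ)+1) := by
      apply Real.sqrt_pos.2; positivity
    have hks : Real.sqrt (k:ℝ) ≥ 0 := Real.sqrt_nonneg _
    have hsqk : Real.sqrt (k:ℝ) * Real.sqrt (k:ℝ) = (k:ℝ) := Real.mul_self_sqrt (Nat.cast_nonneg k)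
    have ht1 : 1 ≤ Real.sqrt ((k:ℝ)+1) := by
      nlinarith [hsq, hpos, Nat.cast_nonneg (α := ℝ) k]
    have hts : (Real.sqrt ((k:ℝ)+1) - Real.sqrt (k:ℝ)) * (Real.sqrt ((k:ℝ)+1) + Real.sqrt (k:ℝ)) = 1 := by
      nlinarith [hsq, hsqk]
    have key : 1/((k:ℝ)+1) ≤ 2 * Real.sqrt ((k:ℝ)+1) - 2 * Real.sqrt (k:ℝ) := by
      rw [div_le_iff₀ (by positivity)]
      nlinarith [hts, ht1, hs, hks, hpos]
    calc ∑ d ∈ range k, 1/((d:ℝ)+1) + 1/((k:ℝ)+1)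
        ≤ 2 * Real.sqrt (k:ℝ) + (2 * Real.sqrt ((k:ℝ)+1) - 2 * Real.sqrt (k:ℝ)) := by
          exact add_le_add ih key
      _ = 2 * Real.sqrt ((k:ℝ)+1) := by ring



/-- F k j = 1/(a_j² - a_k²) off-diagonal, 0 on diagonal -/
noncomputable def Fk (k j : ℕ) : ℝ := if j = k then 0 else 1 / ((aH j)^2 - (aH k)^2)

noncomputable def cH (k j : ℕ) : ℝ := 1 / ((j:ℝ) - (k:ℝ))

lemma cH_k (k : ℕ) : cH k k = 0 := by unfold cH; simp

lemma sum_cH_zero (k : ℕ) : ∑ i ∈ range (2*k+1), cH k i = 0 := by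
  have hrefl := Finset.sum_range_reflect (fun i => cH k i) (2*k+1)
  have hneg : ∀ i ∈ range (2*k+1), cH k (2*k+1-1-i) = - cH k i := by
    intro i hi
    have hi' : i ≤ 2*k := by simpa [Nat.lt_succ_iff] using hi
    unfold cH
    have hc : ((2*k+1-1-i : ℕ) : ℝ) = 2*(k:ℝ) - (i:ℝ) := by
      have : 2*k+1-1-i = 2*k - i := rfl
      rw [this, Nat.cast_sub hi']
      push_cast; ring
    rw [hc]
    by_cases h : i = k
    · subst h
      rw [show (2*(i:ℝ) - (i:ℝ) - (i:ℝ)) = 0 from by ring, show ((i:ℝ) - (i:ℝ)) = 0 from by ring]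
      simp
    · have : ((i:ℝ)) ≠ (k:ℝ) := by exact_mod_cast h
      rw [show (2*(k:ℝ) - (i:ℝ) - (k:ℝ)) = -((i:ℝ) - (k:ℝ)) by ring]
      rw [one_div, one_div, inv_neg]
  rw [Finset.sum_congr rfl hneg, Finset.sum_neg_distrib] at hrefl
  linarith

lemma summable_T (k : ℕ) :
    Summable (fun j : ℕ => cH k j - cH k (j + (2*k+1))) := by
  rw [← summable_nat_add_iff (k+1)]
  refine Summable.of_nonneg_of_le (fun n => ?_) (fun n => ?_) (l_sq.mul_left (2*(k:ℝ)+1))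
  · 
    unfold cH
    have h1 : ((n + (k+1) : ℕ) : ℝ) - (k:ℝ) = (n:ℝ)+1 := by push_cast; ring
    have h2 : ((n + (k+1) + (2*k+1) : ℕ) : ℝ) - (k:ℝ) = (n:ℝ)+1+(2*(k:ℝ)+1) := by push_cast; ring
    rw [h1, h2]
    have : (0:ℝ) < (n:ℝ)+1 := by positivity
    have : (0:ℝ) < (n:ℝ)+1+(2*(k:ℝ)+1) := by positivity
    have := one_div_le_one_div_of_le (by positivity : (0:ℝ) < (n:ℝ)+1)
      (by linarith : (n:ℝ)+1 ≤ (n:ℝ)+1+(2*(k:ℝ)+1))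
    linarith
  · unfold cH
    have h1 : ((n + (k+1) : ℕ) : ℝ) - (k:ℝ) = (n:ℝ)+1 := by push_cast; ring
    have h2 : ((n + (k+1) + (2*k+1) : ℕ) : ℝ) - (k:ℝ) = (n:ℝ)+1+(2*(k:ℝ)+1) := by push_cast; ring
    rw [h1, h2]
    have hx : (0:ℝ) < (n:ℝ)+1 := by positivity
    have hy : (0:ℝ) < (n:ℝ)+1+(2*(k:ℝ)+1) := by positivity
    have heq : 1/((n:ℝ)+1) - 1/((n:ℝ)+1+(2*(k:ℝ)+1))
        = (2*(k:ℝ)+1) / (((n:ℝ)+1) * ((n:ℝ)+1+(2*(k:ℝ)+1))) := by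
      field_simp
      ring
    rw [heq, mul_one_div, div_le_div_iff₀ (by positivity) (by positivity)]
    nlinarith [mul_pos hx (show (0:ℝ) < 2*(k:ℝ)+1 by positivity)]

lemma partial_T (k N : ℕ) :
    ∑ j ∈ range N, (cH k j - cH k (j + (2*k+1)))
      = ∑ i ∈ range (2*k+1), cH k i - ∑ i ∈ range (2*k+1), cH k (N+i) := by
  rw [Finset.sum_sub_distrib]
  have h1 : ∑ j ∈ range N, cH k (j + (2*k+1)) = ∑ j ∈ range N, cH k ((2*k+1) + j) := by
    exact Finset.sum_congr rfl (fun j _ => by rw [Nat.add_comm])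
  have h2 := Finset.sum_range_add (fun i => cH k i) (2*k+1) N
  have h3 := Finset.sum_range_add (fun i => cH k i) N (2*k+1)
  have h4 : (2*k+1) + N = N + (2*k+1) := Nat.add_comm _ _
  rw [h1]
  have : ∑ j ∈ range N, cH k ((2*k+1) + j)
      = ∑ x ∈ range (N + (2*k+1)), cH k x - ∑ i ∈ range (2*k+1), cH k i := by
    rw [← h4, h2]; ring
  rw [this, h3]
  ring

lemma tendsto_tail (k : ℕ) :
    Tendsto (fun N : ℕ => ∑ i ∈ range (2*k+1), cH k (N+i)) atTop (nhds 0) := by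
  have : ∀ i ∈ range (2*k+1), Tendsto (fun N : ℕ => cH k (N+i)) atTop (nhds 0) := by
    intro i _
    have hT : Tendsto (fun N : ℕ => ((N:ℝ) + ((i:ℝ) - (k:ℝ)))) atTop atTop :=
      tendsto_atTop_add_const_right atTop _ tendsto_natCast_atTop_atTop
    have := hT.inv_tendsto_atTop
    refine Tendsto.congr (fun N => ?_) this
    unfold cH
    rw [one_div]
    congr 1
    push_cast
    ring
  have := tendsto_finset_sum (range (2*k+1)) this
  simpa using this

lemma hasSum_T (k : ℕ) : HasSum (fun j : ℕ => cH k j - cH k (j + (2*k+1))) 0 := by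
  apply hasSum_of_tendsto (summable_T k)
  have hps : ∀ N, ∑ j ∈ range N, (cH k j - cH k (j + (2*k+1)))
      = - ∑ i ∈ range (2*k+1), cH k (N+i) := by
    intro N
    rw [partial_T k N, sum_cH_zero k, zero_sub]
  have ht : Tendsto (fun N : ℕ => - ∑ i ∈ range (2*k+1), cH k (N+i)) atTop (nhds 0) := by
    simpa using (tendsto_tail k).neg
  exact Tendsto.congr (fun N => (hps N).symm) ht

lemma Fk_eq (k j : ℕ) : Fk k j
    = (1/(2*(k:ℝ)+1)) * (cH k j - cH k (j + (2*k+1)))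
      + (if j = k then 1/(2*(k:ℝ)+1)^2 else 0) := by
  have hm : ((j + (2*k+1) : ℕ) : ℝ) - (k:ℝ) = (j:ℝ) + (k:ℝ) + 1 := by push_cast; ring
  by_cases h : j = k
  · subst h
    unfold Fk cH
    simp only [eq_self_iff_true, if_true]
    rw [hm]
    have : ((j:ℝ) - (j:ℝ)) = 0 := by ring
    rw [this]
    have hjk : (0:ℝ) < (j:ℝ)+(j:ℝ)+1 := by positivity
    field_simp
    ring
  · unfold Fk cH
    simp only [if_neg h]
    rw [hm, add_zero]
    have hjk : ((j:ℝ)) - (k:ℝ) ≠ 0 := by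
      have : ((j:ℝ)) ≠ (k:ℝ) := by exact_mod_cast h
      exact sub_ne_zero.2 this
    have h2 : ((j:ℝ)) + (k:ℝ) + 1 ≠ 0 := by positivity
    have h3 : (2*(k:ℝ)+1) ≠ 0 := by positivity
    have hfact : (aH j)^2 - (aH k)^2 = ((j:ℝ) - (k:ℝ)) * ((j:ℝ) + (k:ℝ) + 1) := by
      unfold aH; ring
    rw [hfact]
    field_simp
    ring

lemma hasSum_Fk (k : ℕ) : HasSum (Fk k) (1/(2*(k:ℝ)+1)^2) := by
  have h1 := (hasSum_T k).mul_left (1/(2*(k:ℝ)+1))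
  have h2 := hasSum_ite_eq k (1/(2*(k:ℝ)+1)^2)
  have h3 := h1.add h2
  rw [mul_zero, zero_add] at h3
  have hfun : Fk k = fun j => (1/(2*(k:ℝ)+1)) * (cH k j - cH k (j + (2*k+1)))
      + (if j = k then 1/(2*(k:ℝ)+1)^2 else 0) := funext (Fk_eq k)
  rw [hfun]
  exact h3



noncomputable def ZW : ℝ := ∑' d, wH d
noncomputable def C0 : ℝ := 2 + ZW / 2

lemma ZW_nonneg : 0 ≤ ZW := tsum_nonneg wH_nonneg
lemma C0_pos : 0 < C0 := by unfold C0; linarith [ZW_nonneg]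

lemma Fk_factor (k j : ℕ) : (aH j)^2 - (aH k)^2 = ((j:ℝ)-(k:ℝ))*((j:ℝ)+(k:ℝ)+1) := by
  unfold aH; ring

lemma abs_tail (k d : ℕ) :
    |Fk k (d + (k+1))| ≤ (1/(2*Real.sqrt (2*(k:ℝ)+1))) * wH d := by
  have hne : d + (k+1) ≠ k := by omega
  unfold Fk
  rw [if_neg hne, Fk_factor]
  have h1 : ((d + (k+1) : ℕ) : ℝ) - (k:ℝ) = (d:ℝ)+1 := by push_cast; ring
  have h2 : ((d + (k+1) : ℕ) : ℝ) + (k:ℝ) + 1 = ((d:ℝ)+1)+(2*(k:ℝ)+1) := by push_cast; ring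
  rw [h1, h2]
  have hd : (0:ℝ) < (d:ℝ)+1 := by positivity
  have hk : (0:ℝ) < 2*(k:ℝ)+1 := by positivity
  have hpos : (0:ℝ) < ((d:ℝ)+1) * (((d:ℝ)+1)+(2*(k:ℝ)+1)) := by positivity
  rw [abs_of_pos (by positivity)]
  have hsd2 : Real.sqrt ((d:ℝ)+1) * Real.sqrt ((d:ℝ)+1) = (d:ℝ)+1 :=
    Real.mul_self_sqrt (by positivity)
  have hsk2 : Real.sqrt (2*(k:ℝ)+1) * Real.sqrt (2*(k:ℝ)+1) = 2*(k:ℝ)+1 :=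
    Real.mul_self_sqrt (by positivity)
  have hsdp : 0 < Real.sqrt ((d:ℝ)+1) := Real.sqrt_pos.2 (by positivity)
  have hskp : 0 < Real.sqrt (2*(k:ℝ)+1) := Real.sqrt_pos.2 (by positivity)
  have hAM : 2 * Real.sqrt ((d:ℝ)+1) * Real.sqrt (2*(k:ℝ)+1) ≤ ((d:ℝ)+1)+(2*(k:ℝ)+1) := by
    nlinarith [sq_nonneg (Real.sqrt ((d:ℝ)+1) - Real.sqrt (2*(k:ℝ)+1))]
  have hkey : (2 * Real.sqrt (2*(k:ℝ)+1)) * (((d:ℝ)+1) * Real.sqrt ((d:ℝ)+1))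
      ≤ ((d:ℝ)+1) * (((d:ℝ)+1)+(2*(k:ℝ)+1)) := by
    nlinarith [hAM, hd]
  have hY : (0:ℝ) < (2*Real.sqrt (2*(k:ℝ)+1)) * (((d:ℝ)+1)*Real.sqrt ((d:ℝ)+1)) := by positivity
  have hle := one_div_le_one_div_of_le hY hkey
  refine le_trans hle (le_of_eq ?_)
  simp only [wH, one_div_mul_one_div]
lemma summable_absFk (k : ℕ) : Summable (fun j => |Fk k j|) := by
  rw [← summable_nat_add_iff (k+1)]
  exact Summable.of_nonneg_of_le (fun d => abs_nonneg _) (fun d => abs_tail k d)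
    (l_w.mul_left _)

lemma finpart_le (k : ℕ) :
    ∑ j ∈ range (k+1), |Fk k j| ≤ 2 * (1 / Real.sqrt ((k:ℝ)+1)) := by
  rw [Finset.sum_range_succ]
  have hFkk : Fk k k = 0 := by unfold Fk; simp
  rw [hFkk, abs_zero, add_zero]
  have hstep : ∀ j ∈ range k, |Fk k j| ≤ (1/((k:ℝ)-(j:ℝ))) * (1/((k:ℝ)+1)) := by
    intro j hj
    have hjk : j < k := Finset.mem_range.1 hj
    have hne : j ≠ k := Nat.ne_of_lt hjk
    have hcast : (j:ℝ) < (k:ℝ) := by exact_mod_cast hjk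
    unfold Fk
    rw [if_neg hne, Fk_factor]
    have hneg : ((j:ℝ)-(k:ℝ))*((j:ℝ)+(k:ℝ)+1) < 0 := by
      apply mul_neg_of_neg_of_pos (by linarith) (by positivity)
    rw [abs_of_neg (by rw [one_div]; exact inv_neg''.2 hneg)]
    have habs : -(1 / (((j:ℝ)-(k:ℝ))*((j:ℝ)+(k:ℝ)+1)))
        = 1 / (((k:ℝ)-(j:ℝ))*((j:ℝ)+(k:ℝ)+1)) := by
      rw [show ((k:ℝ)-(j:ℝ))*((j:ℝ)+(k:ℝ)+1) = -(((j:ℝ)-(k:ℝ))*((j:ℝ)+(k:ℝ)+1)) from by ring]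
      rw [one_div, one_div, inv_neg]
    rw [habs, ← one_div_mul_one_div]
    apply mul_le_mul_of_nonneg_left _ (le_of_lt (one_div_pos.2 (by linarith)))
    apply one_div_le_one_div_of_le (by positivity)
    linarith [Nat.cast_nonneg (α := ℝ) j]
  have h1 : ∑ j ∈ range k, |Fk k j| ≤ ∑ j ∈ range k, (1/((k:ℝ)-(j:ℝ))) * (1/((k:ℝ)+1)) :=
    Finset.sum_le_sum hstep
  have h2 : ∑ j ∈ range k, (1/((k:ℝ)-(j:ℝ))) * (1/((k:ℝ)+1))
      = (∑ j ∈ range k, 1/((k:ℝ)-(j:ℝ))) * (1/((k:ℝ)+1)) := by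
    rw [Finset.sum_mul]
  have h3 : ∑ j ∈ range k, 1/((k:ℝ)-(j:ℝ)) = ∑ j ∈ range k, 1/((j:ℝ)+1) := by
    rw [← Finset.sum_range_reflect (fun j => 1/((j:ℝ)+1)) k]
    apply Finset.sum_congr rfl
    intro j hj
    have hjk : j < k := Finset.mem_range.1 hj
    have : ((k - 1 - j : ℕ) : ℝ) = (k:ℝ) - 1 - (j:ℝ) := by
      have h : k - 1 - j = k - (1+j) := by omega
      rw [h, Nat.cast_sub (by omega)]
      push_cast; ring
    rw [this]
    ring_nf
  have hs : Real.sqrt ((k:ℝ)) ≤ Real.sqrt ((k:ℝ)+1) := Real.sqrt_le_sqrt (by linarith)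
  have hsq : Real.sqrt ((k:ℝ)+1) * Real.sqrt ((k:ℝ)+1) = (k:ℝ)+1 :=
    Real.mul_self_sqrt (by positivity)
  have hpos : 0 < Real.sqrt ((k:ℝ)+1) := Real.sqrt_pos.2 (by positivity)
  calc ∑ j ∈ range k, |Fk k j|
      ≤ (∑ j ∈ range k, 1/((j:ℝ)+1)) * (1/((k:ℝ)+1)) := by rw [← h3, ← h2]; exact h1
    _ ≤ (2 * Real.sqrt (k:ℝ)) * (1/((k:ℝ)+1)) := by
        apply mul_le_mul_of_nonneg_right (sum_inv_le_sqrt k) (by positivity)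
    _ ≤ 2 * (1 / Real.sqrt ((k:ℝ)+1)) := by
        rw [mul_one_div, mul_one_div, div_le_div_iff₀ (by positivity) hpos]
        nlinarith [hs, hpos, hsq, Real.sqrt_nonneg (k:ℝ)]


lemma tsum_absFk_le (k : ℕ) :
    (∑' j, |Fk k j|) ≤ C0 * (1 / Real.sqrt ((k:ℝ)+1)) := by
  have hsplit := Summable.sum_add_tsum_nat_add (k+1) (summable_absFk k)
  rw [← hsplit]
  have hsk : Real.sqrt ((k:ℝ)+1) ≤ Real.sqrt (2*(k:ℝ)+1) :=
    Real.sqrt_le_sqrt (by linarith [Nat.cast_nonneg (α := ℝ) k])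
  have hp1 : 0 < Real.sqrt ((k:ℝ)+1) := Real.sqrt_pos.2 (by positivity)
  have hp2 : 0 < Real.sqrt (2*(k:ℝ)+1) := Real.sqrt_pos.2 (by positivity)
  have htail : (∑' d, |Fk k (d + (k+1))|) ≤ (ZW/2) * (1 / Real.sqrt ((k:ℝ)+1)) := by
    have h1 : (∑' d, |Fk k (d + (k+1))|)
        ≤ ∑' d, (1/(2*Real.sqrt (2*(k:ℝ)+1))) * wH d :=
      Summable.tsum_le_tsum (abs_tail k) ((summable_nat_add_iff (f := fun j => |Fk k j|) (k+1)).2 (summable_absFk k))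
        (l_w.mul_left _)
    refine h1.trans ?_
    have hz : (∑' x, wH x) = ZW := rfl
    rw [tsum_mul_left, hz]
    have hmono : 1/(2*Real.sqrt (2*(k:ℝ)+1)) ≤ 1/(2*Real.sqrt ((k:ℝ)+1)) :=
      one_div_le_one_div_of_le (by positivity) (by linarith)
    refine (mul_le_mul_of_nonneg_right hmono ZW_nonneg).trans (le_of_eq ?_)
    field_simp
  have hC0 : C0 * (1 / Real.sqrt ((k:ℝ)+1))
      = 2 * (1 / Real.sqrt ((k:ℝ)+1)) + (ZW/2) * (1 / Real.sqrt ((k:ℝ)+1)) := by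
    unfold C0; ring
  rw [hC0]
  exact add_le_add (finpart_le k) htail

noncomputable def qf (k j : ℕ) : ℝ := (aH k)⁻¹ * Fk k j

lemma hasSum_qf (k : ℕ) : HasSum (qf k) ((1/4) * (1/(aH k)^3)) := by
  have h := (hasSum_Fk k).mul_left (aH k)⁻¹
  have hval : (aH k)⁻¹ * (1/(2*(k:ℝ)+1)^2) = (1/4) * (1/(aH k)^3) := by
    rw [show (2*(k:ℝ)+1) = 2 * aH k from by unfold aH; ring]
    have := aH_pos k
    field_simp
    ring
  rwa [hval] at h

lemma abs_qf (k j : ℕ) : |qf k j| = (aH k)⁻¹ * |Fk k j| := by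
  unfold qf
  rw [abs_mul, abs_of_pos (inv_pos.2 (aH_pos k))]

lemma summable_abs_qf (k : ℕ) : Summable (fun j => |qf k j|) := by
  exact ((summable_absFk k).mul_left ((aH k)⁻¹)).congr (fun j => (abs_qf k j).symm)

lemma tsum_abs_qf_le (k : ℕ) : (∑' j, |qf k j|) ≤ (2*C0) * wH k := by
  have h1 : (∑' j, |qf k j|) = (aH k)⁻¹ * ∑' j, |Fk k j| := by
    rw [← tsum_mul_left]
    exact tsum_congr (fun j => abs_qf k j)
  rw [h1]
  have h2 : (aH k)⁻¹ * (∑' j, |Fk k j|) ≤ (aH k)⁻¹ * (C0 * (1 / Real.sqrt ((k:ℝ)+1))) :=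
    mul_le_mul_of_nonneg_left (tsum_absFk_le k) (le_of_lt (inv_pos.2 (aH_pos k)))
  refine h2.trans ?_
  have h3 : (aH k)⁻¹ ≤ 2 / ((k:ℝ)+1) := by
    rw [← one_div]; exact inv_aH_le k
  have hp1 : 0 < Real.sqrt ((k:ℝ)+1) := Real.sqrt_pos.2 (by positivity)
  have hsq : Real.sqrt ((k:ℝ)+1) * Real.sqrt ((k:ℝ)+1) = (k:ℝ)+1 :=
    Real.mul_self_sqrt (by positivity)
  have h4 : (aH k)⁻¹ * (C0 * (1 / Real.sqrt ((k:ℝ)+1)))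
      ≤ (2 / ((k:ℝ)+1)) * (C0 * (1 / Real.sqrt ((k:ℝ)+1))) := by
    exact mul_le_mul_of_nonneg_right h3
      (mul_nonneg (le_of_lt C0_pos) (by positivity))
  refine h4.trans (le_of_eq ?_)
  simp only [wH]
  have hne : Real.sqrt ((k:ℝ)+1) ≠ 0 := ne_of_gt hp1
  field_simp

lemma summable_abs_qf_prod : Summable (fun p : ℕ × ℕ => |qf p.1 p.2|) := by
  apply (summable_prod_of_nonneg (fun p => abs_nonneg _)).2
  constructor
  · intro k; exact summable_abs_qf k
  · apply Summable.of_nonneg_of_le (fun k => tsum_nonneg (fun j => abs_nonneg _))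
      (fun k => tsum_abs_qf_le k) (l_w.mul_left (2*C0))

lemma summable_qf_prod : Summable (fun p : ℕ × ℕ => qf p.1 p.2) :=
  summable_abs_iff.1 summable_abs_qf_prod

lemma summable_aH3 : Summable (fun k => 1/(aH k)^3) := by
  apply Summable.of_nonneg_of_le
    (fun k => le_of_lt (one_div_pos.2 (pow_pos (aH_pos k) 3))) (fun k => ?_) (l_cub.mul_left 8)
  have h := aH_pos k
  have h2 : ((k:ℝ)+1)/2 ≤ aH k := by unfold aH; nlinarith [Nat.cast_nonneg (α := ℝ) k]
  rw [mul_one_div, div_le_div_iff₀ (pow_pos h 3) (by positivity), one_mul]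
  nlinarith [pow_le_pow_left₀ (show (0:ℝ) ≤ ((k:ℝ)+1)/2 by positivity) h2 3]

lemma tsum_qf_prod : (∑' p : ℕ × ℕ, qf p.1 p.2) = (1/4) * ∑' k, 1/(aH k)^3 := by
  rw [Summable.tsum_prod' summable_qf_prod (fun k => (hasSum_qf k).summable)]
  rw [tsum_congr (fun k => (hasSum_qf k).tsum_eq)]
  exact tsum_mul_left




noncomputable def gg (p : ℕ × ℕ) : ℝ := 1 / (aH p.1 * ((p.1:ℝ)+(p.2:ℝ)+1)^2)
noncomputable def dgD (p : ℕ × ℕ) : ℝ := if p.1 = p.2 then 1/(2*(aH p.1)^3) else 0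

lemma gg_nonneg (p : ℕ × ℕ) : 0 ≤ gg p := by
  unfold gg
  have := aH_pos p.1
  positivity

lemma gg_row (j : ℕ) : (fun m => gg (j, m)) = fun m : ℕ => (aH j)⁻¹ * (1 / ((j:ℝ)+(m:ℝ)+1)^2) := by
  funext m
  unfold gg
  rw [← one_div_mul_one_div, one_div]

lemma summable_gg : Summable gg := by
  apply (summable_prod_of_nonneg gg_nonneg).2
  constructor
  · intro j
    rw [gg_row j]
    exact (row_sq_summable j).mul_left _
  · apply Summable.of_nonneg_of_le
      (fun j => tsum_nonneg (fun m => gg_nonneg (j, m))) (fun j => ?_) (l_sq.mul_left 4)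
    have h1 : (∑' m : ℕ, gg (j, m)) = (aH j)⁻¹ * ∑' m : ℕ, 1 / ((j:ℝ)+(m:ℝ)+1)^2 := by
      rw [show (∑' m : ℕ, gg (j, m)) = ∑' m : ℕ, (aH j)⁻¹ * (1 / ((j:ℝ)+(m:ℝ)+1)^2)
        from tsum_congr (fun m => congrFun (gg_row j) m)]
      exact tsum_mul_left
    rw [h1]
    have h2 : (aH j)⁻¹ * (∑' m : ℕ, 1 / ((j:ℝ)+(m:ℝ)+1)^2) ≤ (2/((j:ℝ)+1)) * (2/((j:ℝ)+1)) := by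
      apply mul_le_mul (by rw [← one_div]; exact inv_aH_le j) (row_sq_bound j)
        (tsum_nonneg (fun m => by positivity)) (by positivity)
    refine h2.trans (le_of_eq ?_)
    rw [mul_one_div]
    field_simp
    ring
lemma summable_gg_swap : Summable (fun p : ℕ × ℕ => gg p.swap) :=
  (Equiv.prodComm ℕ ℕ).summable_iff.2 summable_gg

lemma tsum_gg_swap : (∑' p : ℕ × ℕ, gg p.swap) = ∑' p : ℕ × ℕ, gg p :=
  (Equiv.prodComm ℕ ℕ).tsum_eq gg

lemma S_eq : (∑' n : ℕ, oddH 1 (n + 1) / ((n : ℝ) + 1) ^ 2) = ∑' p : ℕ × ℕ, gg p := by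
  have e := Finset.HasAntidiagonal.sigmaAntidiagonalEquivProd (A := ℕ)
  have hsig : Summable (gg ∘ (Finset.HasAntidiagonal.sigmaAntidiagonalEquivProd (A := ℕ))) :=
    (Finset.HasAntidiagonal.sigmaAntidiagonalEquivProd (A := ℕ)).summable_iff.2 summable_gg
  have h1 : (∑' p : ℕ × ℕ, gg p)
      = ∑' x : (Σ n : ℕ, (Finset.HasAntidiagonal.antidiagonal n : Finset (ℕ × ℕ))),
          (gg ∘ (Finset.HasAntidiagonal.sigmaAntidiagonalEquivProd (A := ℕ))) x :=
    ((Finset.HasAntidiagonal.sigmaAntidiagonalEquivProd (A := ℕ)).tsum_eq gg).symm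
  rw [h1]
  rw [Summable.tsum_sigma' (fun n => Summable.of_finite) hsig]
  apply (tsum_congr ?_).symm
  intro n
  have h2 : (∑' c : (Finset.HasAntidiagonal.antidiagonal n : Finset (ℕ × ℕ)),
      (gg ∘ (Finset.HasAntidiagonal.sigmaAntidiagonalEquivProd (A := ℕ))) ⟨n, c⟩)
      = ∑ p ∈ Finset.HasAntidiagonal.antidiagonal n, gg p := by
    simp only [Function.comp, Finset.HasAntidiagonal.sigmaAntidiagonalEquivProd]
    exact Finset.tsum_subtype (Finset.HasAntidiagonal.antidiagonal n) gg
  rw [h2, Finset.Nat.sum_antidiagonal_eq_sum_range_succ_mk]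
  unfold oddH
  rw [Finset.sum_div]
  apply Finset.sum_congr rfl
  intro i hi
  have hin : i ≤ n := Nat.lt_succ_iff.1 (Finset.mem_range.1 hi)
  unfold gg aH
  have hc : ((n - i : ℕ) : ℝ) = (n:ℝ) - (i:ℝ) := Nat.cast_sub hin
  simp only
  rw [hc, pow_one, div_div]
  congr 2
  ring

lemma summable_dgD : Summable dgD := by
  have hinj : Function.Injective (fun j : ℕ => (j, j)) := by
    intro a b h; exact (congrArg Prod.fst h :)
  have hsupp : Function.support dgD ⊆ Set.range (fun j : ℕ => (j, j)) := by
    intro p hp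
    by_cases h : p.1 = p.2
    · exact ⟨p.1, by rw [Prod.ext_iff]; exact ⟨rfl, h⟩⟩
    · exfalso; apply hp; unfold dgD; rw [if_neg h]
  have hcomp : Summable (dgD ∘ (fun j : ℕ => (j, j))) := by
    apply (summable_aH3.mul_left (1/2 : ℝ)).congr
    intro j
    show (1/2 : ℝ) * (1/(aH j)^3) = dgD (j, j)
    unfold dgD
    rw [if_pos rfl]
    ring
  refine (hinj.summable_iff (fun x hx => ?_)).1 hcomp
  have hne : x.1 ≠ x.2 := fun h => hx ⟨x.1, Prod.ext rfl h⟩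
  unfold dgD
  rw [if_neg hne]

lemma tsum_dgD : (∑' p : ℕ × ℕ, dgD p) = (1/2) * ∑' k, 1/(aH k)^3 := by
  have hinj : Function.Injective (fun j : ℕ => (j, j)) := by
    intro a b h; exact (congrArg Prod.fst h :)
  have hsupp : Function.support dgD ⊆ Set.range (fun j : ℕ => (j, j)) := by
    intro p hp
    by_cases h : p.1 = p.2
    · exact ⟨p.1, by rw [Prod.ext_iff]; exact ⟨rfl, h⟩⟩
    · exfalso; apply hp; unfold dgD; rw [if_neg h]
  rw [← hinj.tsum_eq hsupp]
  rw [show ∑' (c : ℕ), dgD (c, c) = ∑' (c : ℕ), (1/2 : ℝ) * (1/(aH c)^3) from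
    tsum_congr (fun c => by unfold dgD; rw [if_pos rfl]; ring)]
  exact tsum_mul_left



lemma key_id (p : ℕ × ℕ) : gg p + gg p.swap = qf p.2 p.1 + qf p.1 p.2 + dgD p := by
  obtain ⟨j, k⟩ := p
  simp only [Prod.swap_prod_mk, gg, qf, Fk, dgD]
  by_cases h : j = k
  · subst h
    simp only [eq_self_iff_true, if_true]
    have hj := aH_pos j
    rw [show ((j:ℝ)+(j:ℝ)+1) = 2 * aH j from by unfold aH; ring]
    field_simp
    ring
  · have hkj : k ≠ j := fun hh => h hh.symm
    simp only [if_neg h, if_neg hkj]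
    have hj := aH_pos j
    have hk := aH_pos k
    have hne : aH j ≠ aH k := by
      unfold aH
      intro hh
      apply h
      exact_mod_cast (by linarith : (j:ℝ) = (k:ℝ))
    have hsub : aH j - aH k ≠ 0 := sub_ne_zero.2 hne
    have hadd : aH j + aH k ≠ 0 := by positivity
    have hd1 : (aH j)^2 - (aH k)^2 ≠ 0 := by
      rw [show (aH j)^2 - (aH k)^2 = (aH j - aH k) * (aH j + aH k) from by ring]
      exact mul_ne_zero hsub hadd
    have hd2 : (aH k)^2 - (aH j)^2 ≠ 0 := by
      intro hh; apply hd1; linarith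
    have hs1 : ((j:ℝ)+(k:ℝ)+1) ≠ 0 := by positivity
    have hs2 : ((k:ℝ)+(j:ℝ)+1) ≠ 0 := by positivity
    have hajk : (j:ℝ) + (k:ℝ) + 1 = aH j + aH k := by unfold aH; ring
    have hakj : (k:ℝ) + (j:ℝ) + 1 = aH j + aH k := by unfold aH; ring
    rw [hajk, hakj, add_zero]
    field_simp
    ring

lemma sigma3_eq : (∑' k, 1/(aH k)^3) = 7 * zetaR 3 := by
  have he : Summable (fun k : ℕ => 1 / (((2*k : ℕ):ℝ)+1)^3) := by
    apply Summable.of_nonneg_of_le (fun k => by positivity) (fun k => ?_) l_cub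
    apply one_div_le_one_div_of_le (by positivity)
    have : ((k:ℝ)+1)^3 ≤ (((2*k : ℕ):ℝ)+1)^3 := by
      apply pow_le_pow_left₀ (by positivity)
      push_cast; linarith [Nat.cast_nonneg (α := ℝ) k]
    linarith
  have ho : Summable (fun k : ℕ => 1 / (((2*k+1 : ℕ):ℝ)+1)^3) := by
    apply Summable.of_nonneg_of_le (fun k => by positivity) (fun k => ?_) l_cub
    apply one_div_le_one_div_of_le (by positivity)
    apply pow_le_pow_left₀ (by positivity)
    push_cast; linarith [Nat.cast_nonneg (α := ℝ) k]
  have hsplit := tsum_even_add_odd (f := fun n : ℕ => 1 / ((n:ℝ)+1)^3) he ho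
  beta_reduce at hsplit
  have hz : (∑' n : ℕ, 1 / ((n:ℝ)+1)^3) = zetaR 3 := rfl
  rw [hz] at hsplit
  have hodd : (∑' k : ℕ, 1 / (((2*k+1 : ℕ):ℝ)+1)^3) = (1/8) * zetaR 3 := by
    rw [show (∑' k : ℕ, 1 / (((2*k+1 : ℕ):ℝ)+1)^3)
        = ∑' k : ℕ, (1/8 : ℝ) * (1 / ((k:ℝ)+1)^3) from tsum_congr (fun k => by
      push_cast
      rw [show (2*(k:ℝ)+1+1) = 2*((k:ℝ)+1) from by ring]
      rw [mul_pow]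
      norm_num
      ring)]
    rw [tsum_mul_left]
    rfl
  have heval : (∑' k : ℕ, 1 / (((2*k : ℕ):ℝ)+1)^3) = (7/8) * zetaR 3 := by
    rw [hodd] at hsplit
    linarith
  rw [show (∑' k, 1/(aH k)^3) = ∑' k : ℕ, (8:ℝ) * (1 / (((2*k : ℕ):ℝ)+1)^3) from
    tsum_congr (fun k => by
      unfold aH
      push_cast
      rw [show (2*(k:ℝ)+1) = 2*((k:ℝ)+1/2) from by ring, mul_pow]
      norm_num
      ring)]
  rw [tsum_mul_left, heval]
  ring

/-- ∑_{n=1}^∞ h_n/n² = (7/2)ζ(3) -/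
theorem linear_T_sum_12 :
    (∑' n : ℕ, oddH 1 (n + 1) / ((n : ℝ) + 1) ^ 2) = 7 / 2 * zetaR 3 := by
  rw [S_eq]
  have hswap_qf : Summable (fun p : ℕ × ℕ => qf p.2 p.1) :=
    (Equiv.prodComm ℕ ℕ).summable_iff.2 summable_qf_prod
  have htsum_swap_qf : (∑' p : ℕ × ℕ, qf p.2 p.1) = ∑' p : ℕ × ℕ, qf p.1 p.2 :=
    (Equiv.prodComm ℕ ℕ).tsum_eq (fun p : ℕ × ℕ => qf p.1 p.2)
  have h1 : (∑' p : ℕ × ℕ, (gg p + gg p.swap))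
      = (∑' p : ℕ × ℕ, gg p) + (∑' p : ℕ × ℕ, gg p.swap) :=
    Summable.tsum_add summable_gg summable_gg_swap
  have h2 : (∑' p : ℕ × ℕ, (gg p + gg p.swap))
      = (∑' p : ℕ × ℕ, (qf p.2 p.1 + qf p.1 p.2 + dgD p)) := tsum_congr key_id
  have h3 : (∑' p : ℕ × ℕ, (qf p.2 p.1 + qf p.1 p.2 + dgD p))
      = (∑' p : ℕ × ℕ, (qf p.2 p.1 + qf p.1 p.2)) + ∑' p : ℕ × ℕ, dgD p :=
    Summable.tsum_add (hswap_qf.add summable_qf_prod) summable_dgD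
  have h4 : (∑' p : ℕ × ℕ, (qf p.2 p.1 + qf p.1 p.2))
      = (∑' p : ℕ × ℕ, qf p.2 p.1) + ∑' p : ℕ × ℕ, qf p.1 p.2 :=
    Summable.tsum_add hswap_qf summable_qf_prod
  have hfinal : 2 * (∑' p : ℕ × ℕ, gg p) = ∑' k, 1/(aH k)^3 := by
    have := h1.symm.trans (h2.trans h3)
    rw [h4, htsum_swap_qf, tsum_qf_prod, tsum_dgD, tsum_gg_swap] at this
    linarith
  have hsig := sigma3_eq
  rw [hsig] at hfinal
  linarith
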